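/- Let G′ be a set of real numbers greater than 1 such that the sum of 1/√g over g ∈ G′ is finite, and let B′ = B(G′) be the multiplicative submonoid of ℝ generated by G′. Assume that |x − y| ≥ δ for all distinct x, y ∈ B′, where δ > 0. Then the set of real numbers α with α > 1, α not an integer, and such that B(G′ ∪ {α}) is δ-separated, has positive Lebesgue measure (in particular, such α exist). -/

import Mathlib

open MeasureTheory
open scoped ENNReal

lemma ruzsa_pow_gap (d : ℕ) (N x y : ℝ) (hN : 0 ≤ N) (hx : N ≤ x) (hxy : x ≤ y) :
    (d+1 : ℝ) * N^d * (y - x) ≤ y^(d+1) - x^(d+1) := by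
  induction d with
  | zero => simp
  | succ d ih =>
    have hx0 : 0 ≤ x := hN.trans hx
    have hNy : N ≤ y := hx.trans hxy
    have h1 : x^(d+1) ≤ y^(d+1) := pow_le_pow_left₀ hx0 hxy _
    have h2 : N^(d+1) ≤ x^(d+1) := pow_le_pow_left₀ hN hx _
    have h3 : N^d * N = N^(d+1) := (pow_succ N d).symm
    have key : y^(d+2) - x^(d+2) = y * (y^(d+1) - x^(d+1)) + x^(d+1) * (y - x) := by ring
    have hNN : 0 ≤ N^d := pow_nonneg hN d
    have hyx : (0:ℝ) ≤ y - x := sub_nonneg.2 hxy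
    have hlhs0 : (0:ℝ) ≤ (d+1 : ℝ) * N^d * (y - x) := by positivity
    have A : N * ((d+1:ℝ) * N^d * (y - x)) ≤ y * (y^(d+1) - x^(d+1)) :=
      mul_le_mul hNy ih hlhs0 (hx0.trans hxy)
    have B : N^(d+1) * (y - x) ≤ x^(d+1) * (y - x) :=
      mul_le_mul_of_nonneg_right h2 hyx
    have goalEq : ((d+1:ℕ)+1 : ℝ) * N^(d+1) * (y - x)
        = N * ((d+1:ℝ) * N^d * (y - x)) + N^(d+1) * (y - x) := by
      push_cast
      rw [pow_succ]
      ring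
    rw [goalEq, key]
    exact add_le_add A B

lemma ruzsa_sqrt_pow (x : ℝ) (hx : 0 ≤ x) (n : ℕ) : Real.sqrt (x^n) = (Real.sqrt x)^n := by
  induction n with
  | zero => simp
  | succ n ih => rw [pow_succ, pow_succ, Real.sqrt_mul (pow_nonneg hx n), ih]

lemma ruzsa_one_le (S : Set ℝ) (hS : ∀ x ∈ S, 1 ≤ x) :
    ∀ b ∈ Submonoid.closure S, 1 ≤ b := by
  intro b hb
  induction hb using Submonoid.closure_induction with
  | mem x h => exact hS x h
  | one => exact le_refl 1
  | mul x y hx hy ihx ihy => nlinarith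

set_option maxHeartbeats 1000000 in
lemma ruzsa_vol_bound (N b b' δ : ℝ) (d : ℕ) (hN : 8 ≤ N) (hδ : 0 < δ) (hδN : δ ≤ N)
    (hb : 1 ≤ b) (hb' : 1 ≤ b') :
    volume {α : ℝ | α ∈ Set.Ioo N (2*N) ∧ |b * α^(d+1) - b'| < δ} ≤
      ENNReal.ofReal ((2*Real.sqrt 2*δ*N) * (Real.sqrt (2*N)/N)^(d+1) *
        (1/Real.sqrt b) * (1/Real.sqrt b')) := by
  have hN0 : (0:ℝ) < N := by linarith
  have hb0 : (0:ℝ) < b := by linarith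
  have hb'0 : (0:ℝ) < b' := by linarith
  set e := d + 1 with he
  set T := {α : ℝ | α ∈ Set.Ioo N (2*N) ∧ |b * α^e - b'| < δ} with hT
  rcases Set.eq_empty_or_nonempty T with hemp | ⟨α₀, hα₀⟩
  · rw [hemp]; simp
  obtain ⟨⟨hα₀1, hα₀2⟩, hα₀3⟩ := hα₀
  have hα₀0 : (0:ℝ) < α₀ := hN0.trans hα₀1
  set u := max (N^e) ((b'-δ)/b) with hu_def
  set v := (b'+δ)/b with hv_def
  have hNe0 : (0:ℝ) < N^e := pow_pos hN0 e
  have hu0 : (0:ℝ) < u := lt_of_lt_of_le hNe0 (le_max_left _ _)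
  have habs := abs_lt.1 hα₀3
  have huα : u < α₀^e := by
    apply max_lt
    · exact pow_lt_pow_left₀ hα₀1 hN0.le (by omega)
    · rw [div_lt_iff₀ hb0]; nlinarith [habs.1]
  have hvα : α₀^e < v := by
    rw [lt_div_iff₀ hb0]; nlinarith [habs.2]
  have hv0 : (0:ℝ) < v := (hu0.trans huα).trans hvα
  have huv : u < v := huα.trans hvα
  set lo := u ^ ((1:ℝ)/e) with hlo_def
  set hi := v ^ ((1:ℝ)/e) with hhi_def
  have he0 : (0:ℝ) < (e:ℝ) := by positivity
  have hroot : ∀ x : ℝ, 0 < x → (x^e) ^ ((1:ℝ)/e) = x := by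
    intro x hx
    rw [← Real.rpow_natCast x e, ← Real.rpow_mul hx.le]
    rw [mul_one_div, div_self (ne_of_gt he0), Real.rpow_one]
  have hsub : T ⊆ Set.Ioo lo hi := by
    intro α ⟨⟨h1, h2⟩, h3⟩
    have hα0 : (0:ℝ) < α := hN0.trans h1
    have habs' := abs_lt.1 h3
    have hu' : u < α^e := by
      apply max_lt
      · exact pow_lt_pow_left₀ h1 hN0.le (by omega)
      · rw [div_lt_iff₀ hb0]; nlinarith [habs'.1]
    have hv' : α^e < v := by rw [lt_div_iff₀ hb0]; nlinarith [habs'.2]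
    constructor
    · calc lo < (α^e) ^ ((1:ℝ)/e) := Real.rpow_lt_rpow hu0.le hu' (by positivity)
        _ = α := hroot α hα0
    · calc α = (α^e) ^ ((1:ℝ)/e) := (hroot α hα0).symm
        _ < hi := Real.rpow_lt_rpow (pow_pos hα0 e).le hv' (by positivity)
  have hlo_pow : lo^e = u := by
    rw [hlo_def, ← Real.rpow_natCast (u ^ ((1:ℝ)/e)) e, ← Real.rpow_mul hu0.le]
    rw [one_div, inv_mul_cancel₀ (ne_of_gt he0), Real.rpow_one]
  have hhi_pow : hi^e = v := by
    rw [hhi_def, ← Real.rpow_natCast (v ^ ((1:ℝ)/e)) e, ← Real.rpow_mul hv0.le]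
    rw [one_div, inv_mul_cancel₀ (ne_of_gt he0), Real.rpow_one]
  have hloN : N ≤ lo := by
    calc N = (N^e) ^ ((1:ℝ)/e) := (hroot N hN0).symm
      _ ≤ lo := Real.rpow_le_rpow hNe0.le (le_max_left _ _) (by positivity)
  have hlohi : lo ≤ hi :=
    Real.rpow_le_rpow hu0.le huv.le (by positivity)
  -- step 1 : hi - lo ≤ 2δ/(b*e*N^d)
  have hgap := ruzsa_pow_gap d N lo hi (hN0.le) hloN hlohi
  have hvu : v - u ≤ 2*δ/b := by
    have : (b'-δ)/b ≤ u := le_max_right _ _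
    have h2 : v - (b'-δ)/b = 2*δ/b := by rw [hv_def]; ring
    linarith
  have hstep1 : hi - lo ≤ 2*δ/(b*(e:ℝ)*N^d) := by
    rw [hlo_pow, hhi_pow] at hgap
    have hcast : ((d:ℝ)+1) = (e:ℝ) := by push_cast [he]; ring
    rw [hcast] at hgap
    rw [le_div_iff₀ (by positivity : (0:ℝ) < b*(e:ℝ)*N^d)]
    have hkey : b * ((e:ℝ) * N^d * (hi - lo)) ≤ b * (2*δ/b) :=
      mul_le_mul_of_nonneg_left (hgap.trans hvu) hb0.le
    have hbb : b * (2*δ/b) = 2*δ := by field_simp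
    nlinarith
  -- window : b' ≤ 2*(2N)^e*b
  have h2Ne : (2*N) ≤ (2*N)^e := le_self_pow₀ (by linarith) (by omega)
  have hwin : b' ≤ 2*(2*N)^e*b := by
    have h1 : α₀^e < (2*N)^e := pow_lt_pow_left₀ hα₀2 hα₀0.le (by omega)
    have h2 : b * α₀^e ≤ b * (2*N)^e := mul_le_mul_of_nonneg_left h1.le hb0.le
    have h3 : (2*N)^e ≤ (2*N)^e * b := le_mul_of_one_le_right (by positivity) hb
    have h4 : b' < b * α₀^e + δ := by linarith [habs.1]
    linarith [h2Ne, hδN]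
  have hsb : Real.sqrt b * Real.sqrt b = b := Real.mul_self_sqrt hb0.le
  have hsb0 : (0:ℝ) < Real.sqrt b := Real.sqrt_pos.2 hb0
  have hsb'0 : (0:ℝ) < Real.sqrt b' := Real.sqrt_pos.2 hb'0
  have h2N0 : (0:ℝ) < 2*N := by linarith
  have hP0 : (0:ℝ) < (Real.sqrt (2*N))^e := pow_pos (Real.sqrt_pos.2 h2N0) e
  have hs20 : (0:ℝ) < Real.sqrt 2 := Real.sqrt_pos.2 (by norm_num)
  have hsqrtwin : Real.sqrt b' ≤ Real.sqrt 2 * (Real.sqrt (2*N))^e * Real.sqrt b := by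
    have h := Real.sqrt_le_sqrt hwin
    rw [Real.sqrt_mul (by positivity : (0:ℝ) ≤ 2*(2*N)^e),
      Real.sqrt_mul (by norm_num : (0:ℝ) ≤ 2),
      ruzsa_sqrt_pow _ h2N0.le] at h
    linarith [h]
  have hfinal : hi - lo ≤ (2*Real.sqrt 2*δ*N) * (Real.sqrt (2*N)/N)^e *
      (1/Real.sqrt b) * (1/Real.sqrt b') := by
    have hstep1' : hi - lo ≤ 2*δ/(b*N^d) := by
      refine hstep1.trans ?_
      rw [div_le_div_iff_of_pos_left (by positivity) (by positivity) (by positivity)]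
      have hee : (1:ℝ) ≤ (e:ℝ) := by exact_mod_cast Nat.one_le_iff_ne_zero.2 (by omega)
      nlinarith [pow_pos hN0 d, mul_pos hb0 (pow_pos hN0 d)]
    apply hstep1'.trans
    have hRHSeq : (2*Real.sqrt 2*δ*N) * (Real.sqrt (2*N)/N)^e * (1/Real.sqrt b) * (1/Real.sqrt b')
        = (2*Real.sqrt 2*δ*(Real.sqrt (2*N))^e)/(N^d*Real.sqrt b*Real.sqrt b') := by
      rw [div_pow, he, pow_succ N d]
      field_simp
    rw [hRHSeq, div_le_div_iff₀ (by positivity) (by positivity)]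
    have hbb : 2*Real.sqrt 2*δ*(Real.sqrt (2*N))^e*(b*N^d)
        = (2*δ*N^d*Real.sqrt b) * (Real.sqrt 2 * (Real.sqrt (2*N))^e * Real.sqrt b) := by
      linear_combination (-(2*Real.sqrt 2*δ*(Real.sqrt (2*N))^e*N^d)) * hsb
    have hmul := mul_le_mul_of_nonneg_left hsqrtwin
      (by positivity : (0:ℝ) ≤ 2*δ*N^d*Real.sqrt b)
    linarith [hmul, hbb.ge, hbb.le]
  calc volume T ≤ volume (Set.Ioo lo hi) := measure_mono hsub
    _ = ENNReal.ofReal (hi - lo) := Real.volume_Ioo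
    _ ≤ _ := ENNReal.ofReal_le_ofReal hfinal

lemma ruzsa_countable (S : Set ℝ) (hS : S.Countable) :
    (Submonoid.closure S : Set ℝ).Countable := by
  have : Countable S := hS.to_subtype
  apply Set.Countable.mono ?_ (Set.countable_range
    (fun l : List S => (l.map (fun x => (x : ℝ))).prod))
  intro b hb
  induction hb using Submonoid.closure_induction with
  | mem x h => exact ⟨[⟨x, h⟩], by simp⟩
  | one => exact ⟨[], by simp⟩
  | mul x y hx hy ihx ihy =>
    obtain ⟨lx, hlx⟩ := ihx
    obtain ⟨ly, hly⟩ := ihy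
    exact ⟨lx ++ ly, by simp [← hlx, ← hly]⟩

lemma ruzsa_fingen (S : Set ℝ) (F : Finset ℝ)
    (hF : ↑F ⊆ (Submonoid.closure S : Set ℝ)) :
    ∃ t : Finset ℝ, ↑t ⊆ S ∧ ↑F ⊆ (Submonoid.closure (↑t : Set ℝ) : Set ℝ) := by
  classical
  have single : ∀ b ∈ Submonoid.closure S, ∃ t : Finset ℝ, ↑t ⊆ S ∧
      b ∈ Submonoid.closure (↑t : Set ℝ) := by
    intro b hb
    induction hb using Submonoid.closure_induction with
    | mem x h => exact ⟨{x}, by simpa using h, Submonoid.subset_closure (by simp)⟩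
    | one => exact ⟨∅, by simp, Submonoid.one_mem _⟩
    | mul x y hx hy ihx ihy =>
      obtain ⟨tx, htx, hmx⟩ := ihx
      obtain ⟨ty, hty, hmy⟩ := ihy
      refine ⟨tx ∪ ty, by simp [Set.union_subset_iff, htx, hty, Finset.coe_union], ?_⟩
      rw [Finset.coe_union]
      exact Submonoid.mul_mem _
        (Submonoid.closure_mono Set.subset_union_left hmx)
        (Submonoid.closure_mono Set.subset_union_right hmy)
  induction F using Finset.induction_on with
  | empty => exact ⟨∅, by simp, by simp⟩
  | @insert a F' hnotmem ih =>
    obtain ⟨t1, ht1, hm1⟩ := ih (by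
      intro x hx; exact hF (by simp [hx]))
    obtain ⟨t2, ht2, hm2⟩ := single a (hF (by simp))
    refine ⟨t1 ∪ t2, by simp [Set.union_subset_iff, Finset.coe_union, ht1, ht2], ?_⟩
    rw [Finset.coe_insert, Finset.coe_union]
    intro x hx
    rcases Set.mem_insert_iff.1 hx with rfl | hx
    · exact Submonoid.closure_mono Set.subset_union_right hm2
    · exact Submonoid.closure_mono Set.subset_union_left (hm1 hx)

lemma ruzsa_euler (t : Finset ℝ) (ht : ∀ g ∈ t, 1 < g) (F : Finset ℝ)
    (hF : ↑F ⊆ (Submonoid.closure (↑t : Set ℝ) : Set ℝ)) :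
    ∑ b ∈ F, 1/Real.sqrt b ≤ ∏ g ∈ t, (1 - 1/Real.sqrt g)⁻¹ := by
  classical
  induction t using Finset.induction_on generalizing F with
  | empty =>
    have hF1 : ∀ b ∈ F, b = (1:ℝ) := by
      intro b hb
      have := hF hb
      rw [Finset.coe_empty, Submonoid.closure_empty] at this
      simpa using this
    rcases Finset.subset_singleton_iff.1 (fun b hb => Finset.mem_singleton.2 (hF1 b hb)) with rfl | rfl
    · simp
    · simp
  | @insert g s hg ih =>
    have hg1 : 1 < g := ht g (Finset.mem_insert_self g s)
    have hs1 : ∀ g' ∈ s, 1 < g' := fun g' h => ht g' (Finset.mem_insert_of_mem h)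
    have hsg0 : (0:ℝ) < Real.sqrt g := Real.sqrt_pos.2 (by linarith)
    have hsg1 : 1 < Real.sqrt g := by
      rw [show (1:ℝ) = Real.sqrt 1 by simp]
      exact Real.sqrt_lt_sqrt (by norm_num) hg1
    set x : ℝ := 1/Real.sqrt g with hx_def
    have hx0 : 0 < x := by positivity
    have hx1 : x < 1 := by rw [hx_def, div_lt_one hsg0]; exact hsg1
    set P : ℝ := ∏ g' ∈ s, (1 - 1/Real.sqrt g')⁻¹ with hP_def
    have hP0 : 0 ≤ P := by
      apply Finset.prod_nonneg
      intro g' hg'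
      have h1 : 1 < g' := hs1 g' hg'
      have h2 : 1/Real.sqrt g' < 1 := by
        rw [div_lt_one (Real.sqrt_pos.2 (by linarith))]
        rw [show (1:ℝ) = Real.sqrt 1 by simp]
        exact Real.sqrt_lt_sqrt (by norm_num) h1
      have := inv_pos.2 (by linarith : (0:ℝ) < 1 - 1/Real.sqrt g')
      linarith
    -- decompose each b ∈ F
    have key : ∀ b ∈ F, ∃ (k : ℕ) (a : ℝ),
        a ∈ Submonoid.closure (↑s : Set ℝ) ∧ b = a * g^k := by
      intro b hb
      have := hF hb
      rw [Finset.coe_insert, Set.insert_eq, Submonoid.closure_union,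
        SetLike.mem_coe, Submonoid.mem_sup] at this
      obtain ⟨y, hy, z, hz, hyz⟩ := this
      obtain ⟨k, hk⟩ := Submonoid.mem_closure_singleton.1 hy
      exact ⟨k, z, hz, by rw [← hyz, ← hk]; ring⟩
    choose! k a ha hmul using key
    have hainS : ∀ b ∈ F, 1 ≤ a b :=
      fun b hb => ruzsa_one_le _ (fun y hy => (hs1 y hy).le) _ (ha b hb)
    set D := F.sup k with hD
    have hterm : ∀ b ∈ F, 1/Real.sqrt b = x^(k b) * (1/Real.sqrt (a b)) := by
      intro b hb
      conv_lhs => rw [hmul b hb]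
      rw [Real.sqrt_mul (by linarith [hainS b hb]),
        ruzsa_sqrt_pow g (by linarith) (k b), hx_def]
      rw [div_pow, one_pow]
      field_simp
    rw [Finset.sum_congr rfl hterm]
    have hmaps : ∀ b ∈ F, k b ∈ Finset.range (D+1) := by
      intro b hb
      exact Finset.mem_range.2 (Nat.lt_succ_of_le (Finset.le_sup hb))
    rw [← Finset.sum_fiberwise_of_maps_to hmaps]
    have hinner : ∀ j ∈ Finset.range (D+1),
        ∑ b ∈ F.filter (fun b => k b = j), x^(k b) * (1/Real.sqrt (a b)) ≤ x^j * P := by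
      intro j _
      have h1 : ∀ b ∈ F.filter (fun b => k b = j),
          x^(k b) * (1/Real.sqrt (a b)) = x^j * (1/Real.sqrt (a b)) := by
        intro b hb
        rw [(Finset.mem_filter.1 hb).2]
      rw [Finset.sum_congr rfl h1, ← Finset.mul_sum]
      apply mul_le_mul_of_nonneg_left ?_ (by positivity)
      -- ∑ over fiber of 1/√(a b) ≤ P
      have hinj : Set.InjOn a (F.filter (fun b => k b = j)) := by
        intro b1 h1' b2 h2' heq
        have hb1 := Finset.mem_filter.1 h1'
        have hb2 := Finset.mem_filter.1 h2'
        rw [hmul b1 hb1.1, hmul b2 hb2.1, heq, hb1.2, hb2.2]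
      have := Finset.sum_image (f := fun y => 1/Real.sqrt y) (g := a)
        (fun b1 h1' b2 h2' heq => hinj h1' h2' heq)
      rw [← this]
      apply ih hs1
      intro y hy
      obtain ⟨b, hb, rfl⟩ := Finset.mem_image.1 (Finset.mem_coe.1 hy)
      exact ha b (Finset.mem_filter.1 hb).1
    calc ∑ j ∈ Finset.range (D+1), ∑ b ∈ F.filter (fun b => k b = j),
          x^(k b) * (1/Real.sqrt (a b))
        ≤ ∑ j ∈ Finset.range (D+1), x^j * P := Finset.sum_le_sum hinner
      _ = (∑ j ∈ Finset.range (D+1), x^j) * P := by rw [Finset.sum_mul]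
      _ ≤ (1-x)⁻¹ * P := by
          apply mul_le_mul_of_nonneg_right ?_ hP0
          have hgeom : ∑ j ∈ Finset.range (D+1), x^j = (1 - x^(D+1))/(1-x) := by
            rw [geom_sum_eq (ne_of_lt hx1)]
            rw [div_eq_div_iff (by linarith) (by linarith)]
            ring
          rw [hgeom]
          rw [div_le_iff₀ (by linarith)]
          rw [inv_mul_cancel₀ (by linarith : (1:ℝ)-x ≠ 0)]
          nlinarith [pow_pos hx0 (D+1)]
      _ = ∏ g' ∈ insert g s, (1 - 1/Real.sqrt g')⁻¹ := by
          rw [Finset.prod_insert hg, hP_def, hx_def]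

lemma ruzsa_const (G' : Set ℝ) (hG' : ∀ g ∈ G', 1 < g)
    (hsum : Summable (fun g : G' => 1 / Real.sqrt (g : ℝ)))
    (δ : ℝ) (hδ : 0 < δ) (hge : ∀ g ∈ G', 1 + δ ≤ g) :
    ∃ C : ℝ, 1 ≤ C ∧ ∀ F : Finset ℝ,
      ↑F ⊆ (Submonoid.closure G' : Set ℝ) → ∑ b ∈ F, 1/Real.sqrt b ≤ C := by
  classical
  set K := ∑' (g : G'), 1 / Real.sqrt (g : ℝ) with hK
  have hK0 : 0 ≤ K := tsum_nonneg (fun g => by positivity)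
  set x0 : ℝ := 1 / Real.sqrt (1 + δ) with hx0_def
  have h1δ : (1:ℝ) < 1 + δ := by linarith
  have hs1δ : 1 < Real.sqrt (1 + δ) := by
    have h := Real.sqrt_lt_sqrt (by norm_num) h1δ
    rwa [Real.sqrt_one] at h
  have hx00 : 0 < x0 := by positivity
  have hx01 : x0 < 1 := by rw [hx0_def, div_lt_one (by linarith)]; exact hs1δ
  set c : ℝ := (1 - x0)⁻¹ with hc_def
  have hc0 : 0 < c := inv_pos.2 (by linarith)
  have hc1 : c * (1 - x0) = 1 := inv_mul_cancel₀ (by linarith)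
  refine ⟨Real.exp (c * K), Real.one_le_exp (by positivity), ?_⟩
  intro F hF
  obtain ⟨t, ht, hFt⟩ := ruzsa_fingen G' F hF
  have ht1 : ∀ g ∈ t, 1 < g := fun g hg => hG' g (ht hg)
  refine (ruzsa_euler t ht1 F hFt).trans ?_
  have hfac : ∀ g ∈ t, (1 - 1/Real.sqrt g)⁻¹ ≤ Real.exp (c * (1/Real.sqrt g)) := by
    intro g hg
    have hg1 : 1 < g := ht1 g hg
    have hsg : Real.sqrt (1+δ) ≤ Real.sqrt g := Real.sqrt_le_sqrt (hge g (ht hg))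
    set y : ℝ := 1/Real.sqrt g with hy_def
    have hy0 : 0 < y := by positivity
    have hyx0 : y ≤ x0 := by
      rw [hy_def, hx0_def]
      apply div_le_div_of_nonneg_left (by norm_num) (by positivity) hsg
    have hy1 : y < 1 := lt_of_le_of_lt hyx0 hx01
    have step1 : (1 - y)⁻¹ ≤ 1 + c * y := by
      rw [inv_le_iff_one_le_mul₀ (by linarith)]
      nlinarith [mul_le_mul_of_nonneg_left hyx0 hc0.le, mul_pos hy0 hc0,
        mul_le_mul_of_nonneg_left hyx0 (mul_pos hy0 hc0).le]
    refine step1.trans ?_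
    linarith [Real.add_one_le_exp (c * y)]
  calc ∏ g ∈ t, (1 - 1/Real.sqrt g)⁻¹
      ≤ ∏ g ∈ t, Real.exp (c * (1/Real.sqrt g)) := by
        apply Finset.prod_le_prod ?_ hfac
        intro g hg
        have hg1 : 1 < g := ht1 g hg
        have : 1/Real.sqrt g < 1 := by
          rw [div_lt_one (Real.sqrt_pos.2 (by linarith))]
          rw [show (1:ℝ) = Real.sqrt 1 by simp]
          exact Real.sqrt_lt_sqrt (by norm_num) hg1
        exact le_of_lt (inv_pos.2 (by linarith))
    _ = Real.exp (∑ g ∈ t, c * (1/Real.sqrt g)) := (Real.exp_sum t _).symm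
    _ ≤ Real.exp (c * K) := by
        rw [Real.exp_le_exp, ← Finset.mul_sum]
        apply mul_le_mul_of_nonneg_left ?_ hc0.le
        -- ∑ g ∈ t, 1/√g ≤ K
        have hts : ∑ g ∈ t, 1/Real.sqrt g
            = ∑ x ∈ t.attach.map ⟨fun x => (⟨x.1, ht x.2⟩ : G'),
                fun a b h => Subtype.ext (show ((a:ℝ)) = (b:ℝ) from congrArg (fun z : G' => (z:ℝ)) h)⟩, 1/Real.sqrt (x:ℝ) := by
          rw [Finset.sum_map]
          simp only [one_div]
          exact (Finset.sum_attach t (fun g => (Real.sqrt g)⁻¹)).symm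
        rw [hts, hK]
        exact Summable.sum_le_tsum _ (fun i _ => by positivity) hsum

/-- **Theorem 3 (Ruzsa).** Let `G'` be a set of reals `> 1` with `∑_{g ∈ G'} 1/√g < ∞`
whose generated multiplicative monoid `B'` is `δ`-separated.  Then the set of non-integer
reals `α > 1` for which the monoid generated by `G' ∪ {α}` is still `δ`-separated has
positive Lebesgue measure. -/
theorem stmt_2 (G' : Set ℝ) (hG' : ∀ g ∈ G', 1 < g)
    (hsum : Summable (fun g : G' => 1 / Real.sqrt (g : ℝ)))
    (δ : ℝ) (hδ : 0 < δ)
    (hsep : ∀ x ∈ Submonoid.closure G', ∀ y ∈ Submonoid.closure G', x ≠ y → δ ≤ |x - y|) :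
    0 < volume {α : ℝ | 1 < α ∧ α ∉ Set.range ((↑) : ℤ → ℝ) ∧
      ∀ x ∈ Submonoid.closure (G' ∪ {α}), ∀ y ∈ Submonoid.closure (G' ∪ {α}),
        x ≠ y → δ ≤ |x - y|} := by
  classical
  -- each generator is ≥ 1 + δ
  have hge : ∀ g ∈ G', 1 + δ ≤ g := by
    intro g hg
    have h1 : (1:ℝ) < g := hG' g hg
    have := hsep g (Submonoid.subset_closure hg) 1 (Submonoid.one_mem _) (by linarith)
    rw [abs_of_pos (by linarith)] at this
    linarith
  obtain ⟨C, hC1, hCb⟩ := ruzsa_const G' hG' hsum δ hδ hge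
  have hC0 : (0:ℝ) < C := by linarith
  -- countability
  have hGc : G'.Countable := by
    have hc := hsum.countable_support
    have hall : Function.support (fun g : G' => 1 / Real.sqrt (g : ℝ)) = Set.univ := by
      ext g
      simp only [Function.mem_support, Set.mem_univ, iff_true]
      have : (1:ℝ) < (g:ℝ) := hG' g g.2
      positivity
    rw [hall] at hc
    have : Countable ↥G' := Set.countable_univ_iff.1 hc
    exact Set.countable_coe_iff.1 this
  have hBc : (Submonoid.closure G' : Set ℝ).Countable := ruzsa_countable G' hGc
  set Bs : Set ℝ := (Submonoid.closure G' : Set ℝ) with hBs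
  haveI : Countable ↥Bs := hBc.to_subtype
  have hone_le : ∀ b ∈ Submonoid.closure G', 1 ≤ b :=
    ruzsa_one_le G' (fun g hg => (hG' g hg).le)
  -- choose N
  set N : ℝ := max (max 8 δ) ((8*δ*C^2)^2 + 1) with hN_def
  have hN8 : 8 ≤ N := le_trans (le_max_left _ _) (le_max_left _ _)
  have hNδ : δ ≤ N := le_trans (le_max_right _ _) (le_max_left _ _)
  have hN0 : (0:ℝ) < N := by linarith
  have hN1 : (1:ℝ) ≤ N := by linarith
  have hNC : (8*δ*C^2)^2 + 1 ≤ N := le_max_right _ _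
  have hsN : 8*δ*C^2 < Real.sqrt N := by
    have h1 : Real.sqrt ((8*δ*C^2)^2) < Real.sqrt N := by
      apply Real.sqrt_lt_sqrt (by positivity)
      linarith
    rwa [Real.sqrt_sq (by positivity)] at h1
  set q : ℝ := Real.sqrt (2*N)/N with hq_def
  have hq0 : 0 ≤ q := by positivity
  have hqhalf : q ≤ 1/2 := by
    rw [hq_def, div_le_iff₀ hN0]
    have h1 : Real.sqrt (2*N) ≤ Real.sqrt ((N/2)^2) := by
      apply Real.sqrt_le_sqrt; nlinarith
    rw [Real.sqrt_sq (by linarith)] at h1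
    linarith
  -- the bad sets
  set Sset : ℕ × ↥Bs × ↥Bs → Set ℝ := fun p =>
    {α : ℝ | α ∈ Set.Ioo N (2*N) ∧ |(p.2.1:ℝ) * α^(p.1+1) - (p.2.2:ℝ)| < δ} with hSset
  set Bad : Set ℝ := (⋃ p, Sset p) ∪ Set.range ((↑) : ℤ → ℝ) with hBad
  -- tsum of weights
  have hT : ∑' (b : ↥Bs), ENNReal.ofReal (1/Real.sqrt (b:ℝ)) ≤ ENNReal.ofReal C := by
    rw [ENNReal.tsum_eq_iSup_sum]
    apply iSup_le
    intro s
    rw [← ENNReal.ofReal_sum_of_nonneg (fun i _ => by positivity)]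
    apply ENNReal.ofReal_le_ofReal
    have himg := Finset.sum_image (s := s) (g := fun b : ↥Bs => (b:ℝ))
      (f := fun y : ℝ => 1/Real.sqrt y) (fun a _ b _ h => Subtype.ext h)
    rw [← himg]
    apply hCb
    intro y hy
    obtain ⟨b, _, rfl⟩ := Finset.mem_image.1 (Finset.mem_coe.1 hy)
    exact b.2
  -- per-index bound
  have hterm : ∀ p : ℕ × ↥Bs × ↥Bs, volume (Sset p) ≤
      ENNReal.ofReal (2*Real.sqrt 2*δ*N) * (ENNReal.ofReal q)^(p.1+1) *
      ENNReal.ofReal (1/Real.sqrt (p.2.1:ℝ)) * ENNReal.ofReal (1/Real.sqrt (p.2.2:ℝ)) := by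
    rintro ⟨m, b, b'⟩
    have hb1 : 1 ≤ (b:ℝ) := hone_le _ b.2
    have hb'1 : 1 ≤ (b':ℝ) := hone_le _ b'.2
    have hvb := ruzsa_vol_bound N b b' δ m hN8 hδ hNδ hb1 hb'1
    refine le_trans hvb (le_of_eq ?_)
    rw [ENNReal.ofReal_mul (by positivity), ENNReal.ofReal_mul (by positivity),
      ENNReal.ofReal_mul (by positivity), ENNReal.ofReal_pow hq0]
  -- summing up
  have hUb : volume (⋃ p, Sset p) ≤ ENNReal.ofReal (8*δ*C^2*Real.sqrt N) := by
    refine (measure_iUnion_le _).trans ?_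
    have h1 : ∑' p : ℕ × ↥Bs × ↥Bs, volume (Sset p) ≤
        ∑' p : ℕ × ↥Bs × ↥Bs,
          ENNReal.ofReal (2*Real.sqrt 2*δ*N) * (ENNReal.ofReal q)^(p.1+1) *
          ENNReal.ofReal (1/Real.sqrt (p.2.1:ℝ)) * ENNReal.ofReal (1/Real.sqrt (p.2.2:ℝ)) :=
      ENNReal.tsum_le_tsum hterm
    refine h1.trans ?_
    have h2 : ∑' p : ℕ × ↥Bs × ↥Bs,
        ENNReal.ofReal (2*Real.sqrt 2*δ*N) * (ENNReal.ofReal q)^(p.1+1) *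
        ENNReal.ofReal (1/Real.sqrt (p.2.1:ℝ)) * ENNReal.ofReal (1/Real.sqrt (p.2.2:ℝ))
        = (ENNReal.ofReal (2*Real.sqrt 2*δ*N)) * (∑' m : ℕ, (ENNReal.ofReal q)^(m+1)) *
          (∑' b : ↥Bs, ENNReal.ofReal (1/Real.sqrt (b:ℝ))) *
          (∑' b : ↥Bs, ENNReal.ofReal (1/Real.sqrt (b:ℝ))) := by
      rw [ENNReal.tsum_prod']
      have hsplit : ∑' (bb : ↥Bs × ↥Bs),
          (ENNReal.ofReal (1/Real.sqrt (bb.1:ℝ)) * ENNReal.ofReal (1/Real.sqrt (bb.2:ℝ)))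
          = (∑' b : ↥Bs, ENNReal.ofReal (1/Real.sqrt (b:ℝ))) *
            (∑' b : ↥Bs, ENNReal.ofReal (1/Real.sqrt (b:ℝ))) := by
        rw [ENNReal.tsum_prod']
        calc ∑' (a : ↥Bs) (b : ↥Bs),
              ENNReal.ofReal (1/Real.sqrt (a:ℝ)) * ENNReal.ofReal (1/Real.sqrt (b:ℝ))
            = ∑' (a : ↥Bs), ENNReal.ofReal (1/Real.sqrt (a:ℝ)) *
                ∑' (b : ↥Bs), ENNReal.ofReal (1/Real.sqrt (b:ℝ)) :=
              tsum_congr (fun a => ENNReal.tsum_mul_left)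
          _ = _ := ENNReal.tsum_mul_right
      have step1 : ∀ m : ℕ, ∑' (bb : ↥Bs × ↥Bs),
          (ENNReal.ofReal (2*Real.sqrt 2*δ*N) * (ENNReal.ofReal q)^(m+1) *
            ENNReal.ofReal (1/Real.sqrt (bb.1:ℝ)) * ENNReal.ofReal (1/Real.sqrt (bb.2:ℝ)))
          = (ENNReal.ofReal (2*Real.sqrt 2*δ*N) * (ENNReal.ofReal q)^(m+1)) *
            ((∑' b : ↥Bs, ENNReal.ofReal (1/Real.sqrt (b:ℝ))) *
              (∑' b : ↥Bs, ENNReal.ofReal (1/Real.sqrt (b:ℝ)))) := by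
        intro m
        calc ∑' (bb : ↥Bs × ↥Bs),
              (ENNReal.ofReal (2*Real.sqrt 2*δ*N) * (ENNReal.ofReal q)^(m+1) *
                ENNReal.ofReal (1/Real.sqrt (bb.1:ℝ)) * ENNReal.ofReal (1/Real.sqrt (bb.2:ℝ)))
            = ∑' (bb : ↥Bs × ↥Bs),
              (ENNReal.ofReal (2*Real.sqrt 2*δ*N) * (ENNReal.ofReal q)^(m+1)) *
                (ENNReal.ofReal (1/Real.sqrt (bb.1:ℝ)) * ENNReal.ofReal (1/Real.sqrt (bb.2:ℝ))) :=
              tsum_congr (fun bb => by ring)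
          _ = (ENNReal.ofReal (2*Real.sqrt 2*δ*N) * (ENNReal.ofReal q)^(m+1)) *
              ∑' (bb : ↥Bs × ↥Bs),
                (ENNReal.ofReal (1/Real.sqrt (bb.1:ℝ)) * ENNReal.ofReal (1/Real.sqrt (bb.2:ℝ))) :=
              ENNReal.tsum_mul_left
          _ = _ := by rw [hsplit]
      calc ∑' (m : ℕ) (bb : ↥Bs × ↥Bs),
            ENNReal.ofReal (2*Real.sqrt 2*δ*N) * (ENNReal.ofReal q)^(m+1) *
            ENNReal.ofReal (1/Real.sqrt (bb.1:ℝ)) * ENNReal.ofReal (1/Real.sqrt (bb.2:ℝ))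
          = ∑' (m : ℕ), (ENNReal.ofReal (2*Real.sqrt 2*δ*N) * (ENNReal.ofReal q)^(m+1)) *
            ((∑' b : ↥Bs, ENNReal.ofReal (1/Real.sqrt (b:ℝ))) *
              (∑' b : ↥Bs, ENNReal.ofReal (1/Real.sqrt (b:ℝ)))) := tsum_congr step1
        _ = ∑' (m : ℕ), ((ENNReal.ofReal (2*Real.sqrt 2*δ*N) *
              ((∑' b : ↥Bs, ENNReal.ofReal (1/Real.sqrt (b:ℝ))) *
              (∑' b : ↥Bs, ENNReal.ofReal (1/Real.sqrt (b:ℝ))))) * (ENNReal.ofReal q)^(m+1)) :=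
            tsum_congr (fun m => by ring)
        _ = (ENNReal.ofReal (2*Real.sqrt 2*δ*N) *
              ((∑' b : ↥Bs, ENNReal.ofReal (1/Real.sqrt (b:ℝ))) *
              (∑' b : ↥Bs, ENNReal.ofReal (1/Real.sqrt (b:ℝ))))) *
            (∑' m : ℕ, (ENNReal.ofReal q)^(m+1)) := ENNReal.tsum_mul_left
        _ = _ := by ring
    rw [h2]
    -- geometric bound
    have hgeo : ∑' m : ℕ, (ENNReal.ofReal q)^(m+1) ≤ ENNReal.ofReal q * 2 := by
      have hhalf : ENNReal.ofReal q ≤ 2⁻¹ := by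
        refine le_trans (ENNReal.ofReal_le_ofReal hqhalf) ?_
        rw [show (1/2 : ℝ) = (2:ℝ)⁻¹ by norm_num,
          ENNReal.ofReal_inv_of_pos (by norm_num)]
        simp
      calc ∑' m : ℕ, (ENNReal.ofReal q)^(m+1)
          ≤ ∑' m : ℕ, ENNReal.ofReal q * (2⁻¹)^m := by
            apply ENNReal.tsum_le_tsum
            intro m
            rw [pow_succ']
            exact mul_le_mul_right (pow_le_pow_left' hhalf m) _
        _ = ENNReal.ofReal q * ∑' m : ℕ, (2⁻¹)^m := ENNReal.tsum_mul_left
        _ = ENNReal.ofReal q * 2 := by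
            rw [ENNReal.tsum_geometric]
            have h12 : (1:ℝ≥0∞) - 2⁻¹ = 2⁻¹ :=
              ENNReal.sub_eq_of_eq_add (by simp) (ENNReal.inv_two_add_inv_two).symm
            rw [h12]
            congr 1
            simp
    calc ENNReal.ofReal (2*Real.sqrt 2*δ*N) * (∑' m : ℕ, (ENNReal.ofReal q)^(m+1)) *
          (∑' b : ↥Bs, ENNReal.ofReal (1/Real.sqrt (b:ℝ))) *
          (∑' b : ↥Bs, ENNReal.ofReal (1/Real.sqrt (b:ℝ)))
        ≤ ENNReal.ofReal (2*Real.sqrt 2*δ*N) * (ENNReal.ofReal q * 2) *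
          ENNReal.ofReal C * ENNReal.ofReal C := by
          exact mul_le_mul' (mul_le_mul' (mul_le_mul' le_rfl hgeo) hT) hT
      _ = ENNReal.ofReal (8*δ*C^2*Real.sqrt N) := by
          rw [show (2:ℝ≥0∞) = ENNReal.ofReal 2 by simp]
          rw [← ENNReal.ofReal_mul (by positivity), ← ENNReal.ofReal_mul (by positivity),
            ← ENNReal.ofReal_mul (by positivity), ← ENNReal.ofReal_mul (by positivity)]
          congr 1
          have h22 : Real.sqrt 2 * Real.sqrt 2 = 2 := Real.mul_self_sqrt (by norm_num)
          have hNq : N * q = Real.sqrt 2 * Real.sqrt N := by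
            rw [hq_def, mul_div_cancel₀ _ (ne_of_gt hN0) , Real.sqrt_mul (by norm_num)]
          calc 2*Real.sqrt 2*δ*N*(q*2)*C*C = 4*δ*C^2*(Real.sqrt 2*(N*q)) := by ring
            _ = 4*δ*C^2*((Real.sqrt 2*Real.sqrt 2)*Real.sqrt N) := by rw [hNq]; ring
            _ = 8*δ*C^2*Real.sqrt N := by rw [h22]; ring
  -- total bad measure
  have hZ : volume (Set.range ((↑) : ℤ → ℝ)) = 0 :=
    (Set.countable_range _).measure_zero _
  have hBadle : volume Bad ≤ ENNReal.ofReal (8*δ*C^2*Real.sqrt N) := by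
    refine (measure_union_le _ _).trans ?_
    rw [hZ, add_zero]
    exact hUb
  have hIoo : volume (Set.Ioo (N:ℝ) (2*N)) = ENNReal.ofReal N := by
    rw [Real.volume_Ioo]
    congr 1
    ring
  have hlt : volume Bad < volume (Set.Ioo (N:ℝ) (2*N)) := by
    rw [hIoo]
    refine lt_of_le_of_lt hBadle ?_
    rw [ENNReal.ofReal_lt_ofReal_iff hN0]
    have hsN0 : 0 < Real.sqrt N := Real.sqrt_pos.2 hN0
    calc 8*δ*C^2*Real.sqrt N < Real.sqrt N * Real.sqrt N :=
        mul_lt_mul_of_pos_right hsN hsN0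
      _ = N := Real.mul_self_sqrt hN0.le
  -- positive measure of the good part
  have hdiff : 0 < volume (Set.Ioo (N:ℝ) (2*N) \ Bad) := by
    by_contra h
    push_neg at h
    have h0 : volume (Set.Ioo (N:ℝ) (2*N) \ Bad) = 0 := le_antisymm (by simpa using h) zero_le
    have hsubs : Set.Ioo (N:ℝ) (2*N) ⊆ (Set.Ioo (N:ℝ) (2*N) \ Bad) ∪ Bad := by
      intro z hz
      by_cases hzb : z ∈ Bad
      · exact Or.inr hzb
      · exact Or.inl ⟨hz, hzb⟩
    have : volume (Set.Ioo (N:ℝ) (2*N)) ≤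
        volume (Set.Ioo (N:ℝ) (2*N) \ Bad) + volume Bad :=
      (measure_mono hsubs).trans (measure_union_le _ _)
    rw [h0, zero_add] at this
    exact absurd (lt_of_le_of_lt this hlt) (lt_irrefl _)
  -- inclusion into the target set
  refine lt_of_lt_of_le hdiff (measure_mono ?_)
  rintro α ⟨hIoo', hnb⟩
  have hnU : ∀ p, α ∉ Sset p := by
    intro p hp
    exact hnb (Or.inl (Set.mem_iUnion.2 ⟨p, hp⟩))
  have hnZ : α ∉ Set.range ((↑) : ℤ → ℝ) := fun h => hnb (Or.inr h)
  have hα1 : (1:ℝ) < α := by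
    have := hIoo'.1
    linarith
  refine ⟨hα1, hnZ, ?_⟩
  have hdec : ∀ z ∈ Submonoid.closure (G' ∪ {α}),
      ∃ bz, bz ∈ Submonoid.closure G' ∧ ∃ kz : ℕ, z = bz * α^kz := by
    intro z hz
    rw [Submonoid.closure_union, Submonoid.mem_sup] at hz
    obtain ⟨y1, hy1, z1, hz1, h⟩ := hz
    obtain ⟨kz, hk⟩ := Submonoid.mem_closure_singleton.1 hz1
    exact ⟨y1, hy1, kz, by rw [← h, ← hk]⟩
  have main : ∀ (c1 c2 : ℝ), c1 ∈ Submonoid.closure G' → c2 ∈ Submonoid.closure G' →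
      ∀ (k l : ℕ), l ≤ k → c1*α^k ≠ c2*α^l → δ ≤ |c1*α^k - c2*α^l| := by
    intro c1 c2 hc1 hc2 k l hlk hne
    obtain ⟨m, rfl⟩ := Nat.exists_eq_add_of_le hlk
    have hfac : c1*α^(l+m) - c2*α^l = α^l * (c1*α^m - c2) := by
      rw [pow_add]; ring
    rw [hfac, abs_mul, abs_of_pos (pow_pos (by linarith) l)]
    have hmain2 : δ ≤ |c1*α^m - c2| := by
      cases m with
      | zero =>
        simp only [pow_zero, mul_one]
        apply hsep c1 hc1 c2 hc2
        intro he
        apply hne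
        rw [he, Nat.add_zero]
      | succ mm =>
        have hns := hnU (mm, ⟨c1, hc1⟩, ⟨c2, hc2⟩)
        simp only [hSset, Set.mem_setOf_eq, not_and, not_lt] at hns
        exact hns hIoo'
    calc δ ≤ |c1*α^m - c2| := hmain2
      _ ≤ α^l * |c1*α^m - c2| :=
        le_mul_of_one_le_left (abs_nonneg _) (one_le_pow₀ hα1.le)
  intro x hx y hy hxy
  obtain ⟨b1, hb1, k1, rfl⟩ := hdec x hx
  obtain ⟨b2, hb2, k2, rfl⟩ := hdec y hy
  rcases le_total k2 k1 with hk | hk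
  · exact main b1 b2 hb1 hb2 k1 k2 hk hxy
  · rw [abs_sub_comm]
    exact main b2 b1 hb2 hb1 k2 k1 hk (Ne.symm hxy)
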